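/- Let g ∈ ℝ^d, let B be a symmetric d×d matrix, and let σ > 0. If s ∈ ℝ^d satisfies the first-order condition ⟨g,s⟩ + ⟨s,Bs⟩ + σ‖s‖³ = 0, then ‖s‖ ≤ (11/4) · max{ ‖B‖/σ, √(‖g‖/σ) }. -/
import Mathlib


open RealInnerProductSpace

/-- upper bound on the step length from the first-order termination
condition of the cubic-regularized subproblem. -/
theorem stmt_7 {d : ℕ} (g : EuclideanSpace ℝ (Fin d))
    (B : EuclideanSpace ℝ (Fin d) →L[ℝ] EuclideanSpace ℝ (Fin d))
    (hBsym : IsSelfAdjoint B) (σ : ℝ) (hσ : 0 < σ)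
    (s : EuclideanSpace ℝ (Fin d))
    (hfo : ⟪g, s⟫ + ⟪s, B s⟫ + σ * ‖s‖ ^ 3 = 0) :
    ‖s‖ ≤ (11 / 4) * max (‖B‖ / σ) (Real.sqrt (‖g‖ / σ)) := by
  set t := ‖s‖ with ht
  set M := max (‖B‖ / σ) (Real.sqrt (‖g‖ / σ)) with hMdef
  have ht0 : 0 ≤ t := norm_nonneg s
  have hM0 : 0 ≤ M := le_trans (Real.sqrt_nonneg _) (le_max_right _ _)
  have h1 : |⟪g, s⟫| ≤ ‖g‖ * t := abs_real_inner_le_norm g s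
  have h2 : |⟪s, B s⟫| ≤ t * (‖B‖ * t) := by
    calc |⟪s, B s⟫| ≤ ‖s‖ * ‖B s‖ := abs_real_inner_le_norm s (B s)
    _ ≤ t * (‖B‖ * t) := by
        gcongr
        exact B.le_opNorm s
  have hkey : σ * t ^ 3 ≤ ‖g‖ * t + ‖B‖ * t ^ 2 := by
    have : σ * t ^ 3 = -⟪g, s⟫ - ⟪s, B s⟫ := by linarith
    rw [this]
    have := abs_le.1 h1
    have := abs_le.1 h2
    nlinarith
  have hg : ‖g‖ ≤ σ * M ^ 2 := by
    have h : Real.sqrt (‖g‖ / σ) ≤ M := le_max_right _ _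
    have h2 : ‖g‖ / σ ≤ M ^ 2 := by
      have := Real.sq_sqrt (div_nonneg (norm_nonneg g) hσ.le)
      nlinarith [Real.sqrt_nonneg (‖g‖ / σ)]
    calc ‖g‖ = σ * (‖g‖ / σ) := by rw [mul_comm, div_mul_cancel₀ _ hσ.ne']
    _ ≤ σ * M ^ 2 := by gcongr
  have hB : ‖B‖ ≤ σ * M := by
    have h : ‖B‖ / σ ≤ M := le_max_left _ _
    calc ‖B‖ = σ * (‖B‖ / σ) := by rw [mul_comm, div_mul_cancel₀ _ hσ.ne']
    _ ≤ σ * M := by gcongr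
  have hkey2 : t ^ 3 ≤ M ^ 2 * t + M * t ^ 2 := by
    have : σ * t ^ 3 ≤ σ * M ^ 2 * t + σ * M * t ^ 2 := by nlinarith
    nlinarith
  have h2M : t ≤ 2 * M := by
    by_contra hcon
    push_neg at hcon
    have tpos : 0 < t := lt_of_le_of_lt (by linarith) hcon
    nlinarith [mul_pos (mul_pos tpos tpos) (sub_pos.2 hcon),
      mul_nonneg (mul_nonneg hM0 ht0) (sub_pos.2 hcon).le]
  linarith
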